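/- In the circular parking model with n places and n−1 cars, for every k with 1 ≤ k ≤ n−1 the conditional expectation of R_{k,n} given L_{k,n} equals (n − L_{k,n})/(n − k); equivalently, for every integer l, E[ R_{k,n} · 1_{L_{k,n} = l} ] = ((n − l)/(n − k)) · P(L_{k,n} = l). -/

import Mathlib

open scoped BigOperators
open Classical Filter Topology

noncomputable section

namespace Parking

/-- The first empty place reached going clockwise from `t` (including `t` itself),
given the set `S` of occupied places. -/
def firstFree {n : ℕ} (S : Finset (ZMod n)) (t : ZMod n) : ZMod n :=
  if h : ∃ i : ℕ, t + (i : ZMod n) ∉ S then t + ((Nat.find h : ℕ) : ZMod n) else t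

/-- `occ t j` : the set of places occupied after the first `j` cars (with first tries
`t 0, …, t (j-1)`) have parked. -/
def occ {n : ℕ} (t : ℕ → ZMod n) : ℕ → Finset (ZMod n)
  | 0 => ∅
  | j + 1 => insert (firstFree (occ t j) (t j)) (occ t j)

/-- The place filled by car `j+1` (0-indexed `j`). -/
def spot {n : ℕ} (t : ℕ → ZMod n) (j : ℕ) : ZMod n :=
  firstFree (occ t j) (t j)

/-- The size of the block whose empty place is `e`, in the configuration with occupied
set `S`: the empty place `e` together with the maximal run of occupied places
immediately preceding it clockwise. -/
def blockSize {n : ℕ} (S : Finset (ZMod n)) (e : ZMod n) : ℕ :=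
  if h : ∃ i : ℕ, e - ((i + 1 : ℕ) : ZMod n) ∉ S then Nat.find h + 1 else 0

/-- The next empty place strictly after `e` clockwise, for occupied set `S`. -/
def nextEmpty {n : ℕ} (S : Finset (ZMod n)) (e : ZMod n) : ZMod n :=
  if h : ∃ i : ℕ, e + ((i + 1 : ℕ) : ZMod n) ∉ S then e + ((Nat.find h + 1 : ℕ) : ZMod n) else e

/-- `L_{j,n}` (1-indexed `j`): the size, just before car `j` parks, of the block whose
empty place is the place `v_j` filled by car `j`. -/
def Lsize {n : ℕ} (t : ℕ → ZMod n) (j : ℕ) : ℕ :=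
  blockSize (occ t (j - 1)) (spot t (j - 1))

/-- `R_{j,n}` (1-indexed `j`): the size, just before car `j` parks, of the block
immediately following (clockwise) the block whose empty place is `v_j`. -/
def Rsize {n : ℕ} (t : ℕ → ZMod n) (j : ℕ) : ℕ :=
  blockSize (occ t (j - 1)) (nextEmpty (occ t (j - 1)) (spot t (j - 1)))

/-- `D_{j,n}` (1-indexed `j`): the displacement of car `j`, i.e. `((v_j - t_j) mod n) + 1`. -/
def Dsize {n : ℕ} (t : ℕ → ZMod n) (j : ℕ) : ℕ :=
  (spot t (j - 1) - t (j - 1)).val + 1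

/-- Extend a finite try-sequence `t : Fin k → Fin n` into a function `ℕ → ZMod n`. -/
def extend (n k : ℕ) (t : Fin k → Fin n) : ℕ → ZMod n :=
  fun j => if h : j < k then ((t ⟨j, h⟩ : ℕ) : ZMod n) else 0

/-- Expectation, under the uniform measure on try-sequences `{0,…,n-1}^k`,
of a real functional of the parking process with `n` places and `k` cars. -/
def expect (n k : ℕ) (X : (ℕ → ZMod n) → ℝ) : ℝ :=
  (∑ t : Fin k → Fin n, X (extend n k t)) / (n : ℝ) ^ k

/-- Probability, under the uniform measure on try-sequences `{0,…,n-1}^k`, of an event. -/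
def prob (n k : ℕ) (P : (ℕ → ZMod n) → Prop) : ℝ :=
  expect n k (fun t => if P t then 1 else 0)

/-- The solution of the additive Smoluchowski equation with monodisperse initial data. -/
def q (k : ℕ) (t : ℝ) : ℝ :=
  ((k : ℝ) * (1 - Real.exp (-t))) ^ (k - 1) * Real.exp (-t) *
    Real.exp (-((k : ℝ) * (1 - Real.exp (-t)))) / (Nat.factorial k)

/-- `emptyPlace S e i`: the `i`-th empty place clockwise starting from `e` (which is
assumed empty), for occupied set `S`. -/
def emptyPlace {n : ℕ} (S : Finset (ZMod n)) (e : ZMod n) : ℕ → ZMod n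
  | 0 => e
  | i + 1 => nextEmpty S (emptyPlace S e i)
variable {n : ℕ}

section Coord
variable [NeZero n]

lemma npos : 0 < n := Nat.pos_of_ne_zero (NeZero.ne n)

lemma cast_val_zmod (a : ZMod n) : ((a.val : ℕ) : ZMod n) = a :=
  ZMod.natCast_rightInverse a

lemma coord_cancel (v : ZMod n) (z : ℕ) (hz : z < n) : ((v + (z : ZMod n)) - v).val = z := by
  rw [add_sub_cancel_left, ZMod.val_cast_of_lt hz]

lemma coord_inj {v : ZMod n} {z w : ℕ} (hz : z < n) (hw : w < n)
    (h : v + (z : ZMod n) = v + (w : ZMod n)) : z = w := by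
  have := add_left_cancel h
  rw [← ZMod.val_cast_of_lt hz, ← ZMod.val_cast_of_lt hw, this]

lemma exists_ge_not_mem {S : Finset (ZMod n)} {v : ZMod n} (hv : v ∉ S) (c : ℕ) :
    ∃ d : ℕ, c ≤ d ∧ v + (d : ZMod n) ∉ S := by
  refine ⟨n * (c + 1), ?_, ?_⟩
  · have := npos (n := n); nlinarith
  · have : ((n * (c + 1) : ℕ) : ZMod n) = 0 := by
      push_cast; simp
    rw [this, add_zero]; exact hv

/-- least coordinate `d ≥ c` such that `v + d` is empty. -/
def Fm (S : Finset (ZMod n)) (v : ZMod n) (c : ℕ) : ℕ :=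
  if h : ∃ d : ℕ, c ≤ d ∧ v + (d : ZMod n) ∉ S then Nat.find h else 0

variable {S : Finset (ZMod n)} {v : ZMod n}

lemma Fm_spec (hv : v ∉ S) (c : ℕ) :
    c ≤ Fm S v c ∧ v + ((Fm S v c : ℕ) : ZMod n) ∉ S := by
  rw [Fm, dif_pos (exists_ge_not_mem hv c)]
  exact Nat.find_spec (exists_ge_not_mem hv c)

lemma Fm_le (hv : v ∉ S) {c d : ℕ} (hcd : c ≤ d) (hd : v + (d : ZMod n) ∉ S) :
    Fm S v c ≤ d := by
  rw [Fm, dif_pos (exists_ge_not_mem hv c)]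
  exact Nat.find_min' _ ⟨hcd, hd⟩

lemma Fm_not (hv : v ∉ S) {c d : ℕ} (h1 : c ≤ d) (h2 : d < Fm S v c) :
    v + (d : ZMod n) ∈ S := by
  by_contra hd
  exact absurd (Fm_le hv h1 hd) (by omega)

lemma Fm_eq (hv : v ∉ S) {c y : ℕ} (h1 : c ≤ y) (h2 : v + (y : ZMod n) ∉ S)
    (h3 : ∀ z, c ≤ z → z < y → v + (z : ZMod n) ∈ S) : Fm S v c = y := by
  refine le_antisymm (Fm_le hv h1 h2) ?_
  by_contra h
  exact absurd ((Fm_spec hv c).2) (by simpa using h3 _ (Fm_spec hv c).1 (by omega))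

lemma Fm_le_n (hv : v ∉ S) {c : ℕ} (h : c ≤ n) : Fm S v c ≤ n :=
  Fm_le hv h (by rw [ZMod.natCast_self, add_zero]; exact hv)

lemma Fm_zero (hv : v ∉ S) : Fm S v 0 = 0 :=
  Fm_eq hv le_rfl (by simpa using hv) (fun z _ hz => by omega)

lemma firstFree_eq_coord (hv : v ∉ S) (x : ZMod n) :
    firstFree S x = v + ((Fm S v ((x - v).val) : ℕ) : ZMod n) := by
  set c := (x - v).val with hc
  have hx : x = v + (c : ZMod n) := by rw [hc, cast_val_zmod]; ring
  have hex : ∃ i : ℕ, x + (i : ZMod n) ∉ S := by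
    refine ⟨Fm S v c - c, ?_⟩
    have h1 := (Fm_spec hv c).1
    have : x + ((Fm S v c - c : ℕ) : ZMod n) = v + ((Fm S v c : ℕ) : ZMod n) := by
      rw [hx]; push_cast [Nat.cast_sub h1]; ring
    rw [this]; exact (Fm_spec hv c).2
  rw [firstFree, dif_pos hex]
  set d := Nat.find hex with hd
  have hspec : x + (d : ZMod n) ∉ S := Nat.find_spec hex
  have h1 : Fm S v c ≤ c + d := by
    refine Fm_le hv (by omega) ?_
    have : v + ((c + d : ℕ) : ZMod n) = x + (d : ZMod n) := by rw [hx]; push_cast; ring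
    rw [this]; exact hspec
  have h2 : d ≤ Fm S v c - c := by
    refine Nat.find_min' hex ?_
    have h1' := (Fm_spec hv c).1
    have : x + ((Fm S v c - c : ℕ) : ZMod n) = v + ((Fm S v c : ℕ) : ZMod n) := by
      rw [hx]; push_cast [Nat.cast_sub h1']; ring
    rw [this]; exact (Fm_spec hv c).2
  have h1' := (Fm_spec hv c).1
  have hdc : c + d = Fm S v c := by omega
  rw [hx]; push_cast [← hdc]; ring

lemma firstFree_not_mem (hv : v ∉ S) (x : ZMod n) : firstFree S x ∉ S := by
  rw [firstFree_eq_coord hv x]; exact (Fm_spec hv _).2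

lemma nextEmpty_eq_coord (hv : v ∉ S) {c : ℕ} (hc : c < n) :
    nextEmpty S (v + (c : ZMod n)) = v + ((Fm S v (c + 1) : ℕ) : ZMod n) := by
  set e := v + (c : ZMod n) with he
  have key : ∀ i : ℕ, e + ((i + 1 : ℕ) : ZMod n) = v + ((c + 1 + i : ℕ) : ZMod n) := by
    intro i; rw [he]; push_cast; ring
  have hex : ∃ i : ℕ, e + ((i + 1 : ℕ) : ZMod n) ∉ S := by
    refine ⟨Fm S v (c + 1) - (c + 1), ?_⟩
    have h1 := (Fm_spec hv (c + 1)).1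
    rw [key]
    have : c + 1 + (Fm S v (c + 1) - (c + 1)) = Fm S v (c + 1) := by omega
    rw [this]; exact (Fm_spec hv (c + 1)).2
  rw [nextEmpty, dif_pos hex]
  set d := Nat.find hex with hd
  have hspec : e + ((d + 1 : ℕ) : ZMod n) ∉ S := Nat.find_spec hex
  have h1 : Fm S v (c + 1) ≤ c + 1 + d := by
    refine Fm_le hv (by omega) ?_
    rw [← key]; exact hspec
  have h2 : d ≤ Fm S v (c + 1) - (c + 1) := by
    refine Nat.find_min' hex ?_
    have h1' := (Fm_spec hv (c + 1)).1
    rw [key]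
    have : c + 1 + (Fm S v (c + 1) - (c + 1)) = Fm S v (c + 1) := by omega
    rw [this]; exact (Fm_spec hv (c + 1)).2
  have h1' := (Fm_spec hv (c + 1)).1
  have hdc : c + 1 + d = Fm S v (c + 1) := by omega
  rw [he]; push_cast [← hdc]; ring_nf

lemma blockSize_eq (hv : v ∉ S) {e : ZMod n} {g : ℕ} (hg1 : 1 ≤ g)
    (h2 : e - ((g : ℕ) : ZMod n) ∉ S)
    (h3 : ∀ i : ℕ, 1 ≤ i → i < g → e - ((i : ℕ) : ZMod n) ∈ S) : blockSize S e = g := by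
  have hex : ∃ i : ℕ, e - ((i + 1 : ℕ) : ZMod n) ∉ S := by
    refine ⟨g - 1, ?_⟩
    have : g - 1 + 1 = g := by omega
    rw [this]; exact h2
  rw [blockSize, dif_pos hex]
  set d := Nat.find hex with hd
  have hspec : e - ((d + 1 : ℕ) : ZMod n) ∉ S := Nat.find_spec hex
  have hle : d ≤ g - 1 := by
    refine Nat.find_min' hex ?_
    have : g - 1 + 1 = g := by omega
    rw [this]; exact h2
  have hge : ¬ d + 1 < g := fun hlt => hspec (h3 (d + 1) (by omega) hlt)
  omega

end Coord
section Enum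
variable [NeZero n] {S : Finset (ZMod n)} {v : ZMod n}

set_option linter.unusedSectionVars false
set_option linter.unusedVariables false

lemma blockSize_between (hv : v ∉ S) {c₀ c₁ : ℕ} (h0 : c₀ < c₁) (hc1 : c₁ ≤ n)
    (hm0 : v + (c₀ : ZMod n) ∉ S)
    (hfull : ∀ z, c₀ < z → z < c₁ → v + (z : ZMod n) ∈ S) :
    blockSize S (v + (c₁ : ZMod n)) = c₁ - c₀ := by
  refine blockSize_eq (g := c₁ - c₀) hv (by omega) ?_ ?_
  · have : v + (c₁ : ZMod n) - ((c₁ - c₀ : ℕ) : ZMod n) = v + (c₀ : ZMod n) := by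
      push_cast [Nat.cast_sub (le_of_lt h0)]; ring
    rw [this]; exact hm0
  · intro i hi1 hi2
    have : v + (c₁ : ZMod n) - ((i : ℕ) : ZMod n) = v + ((c₁ - i : ℕ) : ZMod n) := by
      push_cast [Nat.cast_sub (by omega : i ≤ c₁)]; ring
    rw [this]; exact hfull _ (by omega) (by omega)

lemma blockSize_base_coord (hv : v ∉ S) {cmax : ℕ} (hlt : cmax < n)
    (hcm : v + (cmax : ZMod n) ∉ S)
    (hmax : ∀ z, cmax < z → z < n → v + (z : ZMod n) ∈ S) :
    blockSize S v = n - cmax := by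
  refine blockSize_eq (g := n - cmax) hv (by omega) ?_ ?_
  · have : v - ((n - cmax : ℕ) : ZMod n) = v + (cmax : ZMod n) := by
      push_cast [Nat.cast_sub (le_of_lt hlt)]
      rw [ZMod.natCast_self]; ring
    rw [this]; exact hcm
  · intro i hi1 hi2
    have : v - ((i : ℕ) : ZMod n) = v + ((n - i : ℕ) : ZMod n) := by
      push_cast [Nat.cast_sub (by omega : i ≤ n)]
      rw [ZMod.natCast_self]; ring
    rw [this]; exact hmax _ (by omega) (by omega)

/-- enumeration of empty coordinates -/
def Em (S : Finset (ZMod n)) (v : ZMod n) : ℕ → ℕ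
  | 0 => 0
  | j + 1 => Fm S v (Em S v j + 1)

@[simp] lemma Em_zero : Em S v 0 = 0 := rfl

lemma Em_not_mem (hv : v ∉ S) (j : ℕ) : v + ((Em S v j : ℕ) : ZMod n) ∉ S := by
  cases j with
  | zero => simpa using hv
  | succ j => exact (Fm_spec hv _).2

lemma Em_lt_succ (hv : v ∉ S) (j : ℕ) : Em S v j < Em S v (j + 1) := by
  have := (Fm_spec hv (Em S v j + 1)).1
  show Em S v j < Fm S v (Em S v j + 1)
  omega

lemma Em_strictMono (hv : v ∉ S) : StrictMono (Em S v) :=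
  strictMono_nat_of_lt_succ (Em_lt_succ hv)

lemma Em_mono (hv : v ∉ S) {i j : ℕ} (h : i ≤ j) : Em S v i ≤ Em S v j :=
  (Em_strictMono hv).monotone h

lemma no_between (hv : v ∉ S) {j z : ℕ} (h1 : Em S v j < z) (h2 : z < Em S v (j + 1)) :
    v + (z : ZMod n) ∈ S :=
  Fm_not hv (by omega) h2

/-- the set of empty coordinates -/
def Cset (S : Finset (ZMod n)) (v : ZMod n) : Finset ℕ :=
  (Finset.range n).filter (fun z => v + (z : ZMod n) ∉ S)

lemma Cset_card : (Cset S v).card = n - S.card := by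
  have h : (Cset S v).card = Sᶜ.card := by
    refine Finset.card_bij (fun z _ => v + (z : ZMod n)) ?_ ?_ ?_
    · intro z hz
      simp only [Cset, Finset.mem_filter, Finset.mem_range] at hz
      simpa using hz.2
    · intro z hz w hw h
      simp only [Cset, Finset.mem_filter, Finset.mem_range] at hz hw
      exact coord_inj hz.1 hw.1 h
    · intro y hy
      refine ⟨(y - v).val, ?_, ?_⟩
      · simp only [Cset, Finset.mem_filter, Finset.mem_range]
        refine ⟨ZMod.val_lt _, ?_⟩
        rw [cast_val_zmod]
        simpa [add_sub_cancel] using (Finset.mem_compl.mp hy)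
      · show v + (((y - v).val : ℕ) : ZMod n) = y
        rw [cast_val_zmod]; ring
  rw [h, Finset.card_compl, ZMod.card]

lemma Em_mem_Cset (hv : v ∉ S) {j : ℕ} (hj : Em S v j < n) : Em S v j ∈ Cset S v := by
  simp only [Cset, Finset.mem_filter, Finset.mem_range]
  exact ⟨hj, Em_not_mem hv j⟩

lemma count_le (hv : v ∉ S) : ∀ j : ℕ, Em S v j < n →
    ((Cset S v).filter (· ≤ Em S v j)).card = j + 1 := by
  intro j
  induction j with
  | zero =>
    intro _
    have h1 : (Cset S v).filter (· ≤ Em S v 0) = {0} := by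
      ext z
      simp only [Finset.mem_filter, Finset.mem_singleton, Cset, Finset.mem_range, Em_zero,
        Nat.le_zero]
      constructor
      · rintro ⟨_, hz⟩; exact hz
      · rintro rfl
        exact ⟨⟨npos, by simpa using hv⟩, rfl⟩
    rw [h1]; simp
  | succ j ih =>
    intro hj1
    have hj : Em S v j < n := lt_trans (Em_lt_succ hv j) hj1
    have hins : (Cset S v).filter (· ≤ Em S v (j + 1)) =
        insert (Em S v (j + 1)) ((Cset S v).filter (· ≤ Em S v j)) := by
      ext z
      simp only [Finset.mem_filter, Finset.mem_insert, Cset, Finset.mem_range]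
      constructor
      · rintro ⟨⟨hzn, hz⟩, hle⟩
        rcases Nat.lt_or_ge (Em S v j) z with h | h
        · left
          rcases Nat.lt_or_ge z (Em S v (j + 1)) with h2 | h2
          · exact absurd (no_between hv h h2) hz
          · omega
        · right; exact ⟨⟨hzn, hz⟩, h⟩
      · rintro (rfl | ⟨⟨hzn, hz⟩, hle⟩)
        · exact ⟨⟨hj1, Em_not_mem hv _⟩, le_refl _⟩
        · refine ⟨⟨hzn, hz⟩, ?_⟩
          have := Em_lt_succ hv j; omega
    rw [hins, Finset.card_insert_of_notMem, ih hj]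
    simp only [Finset.mem_filter]
    intro ⟨_, hle⟩
    have := Em_lt_succ hv j; omega

lemma Em_lt_n (hv : v ∉ S) (hcard : S.card < n) :
    ∀ j : ℕ, j ≤ n - S.card - 1 → Em S v j < n := by
  intro j
  induction j with
  | zero => intro _; show (0 : ℕ) < n; exact npos
  | succ j ih =>
    intro hj
    have hjn : Em S v j < n := ih (by omega)
    have hle : Em S v (j + 1) ≤ n := Fm_le_n hv (by omega)
    rcases Nat.lt_or_ge (Em S v (j + 1)) n with h | h
    · exact h
    · exfalso
      have heq : Em S v (j + 1) = n := by omega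
      have hCfull : Cset S v = (Cset S v).filter (· ≤ Em S v j) := by
        ext z
        simp only [Finset.mem_filter, Cset, Finset.mem_range]
        constructor
        · rintro ⟨hzn, hz⟩
          refine ⟨⟨hzn, hz⟩, ?_⟩
          by_contra hgt
          exact hz (no_between hv (j := j) (by omega) (by omega))
        · tauto
      have h1 := count_le hv j hjn
      rw [← hCfull, Cset_card] at h1
      omega

lemma Em_max (hv : v ∉ S) (hcard : S.card < n) {z : ℕ} (hz : z ∈ Cset S v) :
    z ≤ Em S v (n - S.card - 1) := by
  by_contra hgt
  push_neg at hgt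
  have hjn : Em S v (n - S.card - 1) < n := Em_lt_n hv hcard _ le_rfl
  simp only [Cset, Finset.mem_filter, Finset.mem_range] at hz
  have hEE : Em S v (n - S.card - 1 + 1) = Fm S v (Em S v (n - S.card - 1) + 1) := rfl
  have hEm1 : Em S v (n - S.card - 1 + 1) ≤ z := by rw [hEE]; exact Fm_le hv (by omega) hz.2
  have hEm1n : Em S v (n - S.card - 1 + 1) < n := by omega
  have h1 := count_le hv (n - S.card - 1 + 1) hEm1n
  have h2 : ((Cset S v).filter (· ≤ Em S v (n - S.card - 1 + 1))).card ≤ (Cset S v).card :=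
    Finset.card_filter_le _ _
  rw [Cset_card] at h2
  omega

lemma Fm_top (hv : v ∉ S) (hcard : S.card < n) :
    Fm S v (Em S v (n - S.card - 1) + 1) = n := by
  have hjn : Em S v (n - S.card - 1) < n := Em_lt_n hv hcard _ le_rfl
  have hle : Em S v (n - S.card - 1 + 1) ≤ n := Fm_le_n hv (by omega)
  show Em S v (n - S.card - 1 + 1) = n
  rcases Nat.lt_or_ge (Em S v (n - S.card - 1 + 1)) n with h | h
  · exfalso
    have hmem : Em S v (n - S.card - 1 + 1) ∈ Cset S v := Em_mem_Cset hv h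
    have h2 := Em_max hv hcard hmem
    have h3 := Em_lt_succ hv (n - S.card - 1)
    omega
  · omega

lemma blockSize_base (hv : v ∉ S) (hcard : S.card < n) :
    blockSize S v = n - Em S v (n - S.card - 1) := by
  refine blockSize_base_coord hv (Em_lt_n hv hcard _ le_rfl) (Em_not_mem hv _) ?_
  intro z h1 h2
  have h3 := Fm_top hv hcard
  exact Fm_not hv (c := Em S v (n - S.card - 1) + 1) (d := z) (by omega) (by omega)

end Enum
section Perm

/-- piecewise swap of the interval `(0,a]` with `(b,c]`, shifting `(a,b]`. -/
def pswap (a b c x : ℕ) : ℕ :=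
  if x = 0 then 0
  else if x ≤ a then x + (c - a)
  else if x ≤ b then x - a + (c - b)
  else if x ≤ c then x - b
  else x

lemma pswap_lt {a b c x m : ℕ} (h1 : 1 ≤ a) (h2 : a ≤ b) (h3 : b < c) (hc : c < m)
    (hx : x < m) : pswap a b c x < m := by
  unfold pswap; split_ifs <;> first | tauto | omega

lemma pswap_inv {a b c : ℕ} (h1 : 1 ≤ a) (h2 : a ≤ b) (h3 : b < c) (x : ℕ) :
    pswap (c - b) (c - a) c (pswap a b c x) = x := by
  unfold pswap; split_ifs <;> first | tauto | omega

lemma pswap_inv' {a b c : ℕ} (h1 : 1 ≤ a) (h2 : a ≤ b) (h3 : b < c) (x : ℕ) :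
    pswap a b c (pswap (c - b) (c - a) c x) = x := by
  have h := pswap_inv (a := c - b) (b := c - a) (c := c) (by omega) (by omega) (by omega) x
  rw [Nat.sub_sub_self (by omega : a ≤ c), Nat.sub_sub_self (by omega : b ≤ c)] at h
  exact h

@[simp] lemma pswap_zero {a b c : ℕ} : pswap a b c 0 = 0 := by unfold pswap; simp

lemma pswap_succ {a b c x : ℕ} (h1 : 1 ≤ a) (h2 : a ≤ b) (h3 : b < c)
    (hx0 : x ≠ 0) (hxa : x ≠ a) (hxb : x ≠ b) (hxc : x ≠ c) :
    pswap a b c (x + 1) = pswap a b c x + 1 := by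
  unfold pswap; split_ifs <;> first | tauto | omega

variable [NeZero n]

/-- conjugated permutation on `ZMod n`. -/
def pim (a b c : ℕ) (v : ZMod n) (x : ZMod n) : ZMod n :=
  v + ((pswap a b c ((x - v).val) : ℕ) : ZMod n)

lemma pim_coord {a b c : ℕ} (h1 : 1 ≤ a) (h2 : a ≤ b) (h3 : b < c) (hc : c < n)
    (v x : ZMod n) : ((pim a b c v x) - v).val = pswap a b c ((x - v).val) := by
  rw [pim, coord_cancel]
  exact pswap_lt h1 h2 h3 hc (ZMod.val_lt _)

lemma pim_left_inv {a b c : ℕ} (h1 : 1 ≤ a) (h2 : a ≤ b) (h3 : b < c) (hc : c < n)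
    (v x : ZMod n) : pim (c - b) (c - a) c v (pim a b c v x) = x := by
  rw [pim, pim_coord h1 h2 h3 hc, pswap_inv h1 h2 h3, cast_val_zmod]; ring

lemma pim_right_inv {a b c : ℕ} (h1 : 1 ≤ a) (h2 : a ≤ b) (h3 : b < c) (hc : c < n)
    (v x : ZMod n) : pim a b c v (pim (c - b) (c - a) c v x) = x := by
  have h1' : 1 ≤ c - b := by omega
  have h2' : c - b ≤ c - a := by omega
  have h3' : c - a < c := by omega
  rw [pim, pim_coord h1' h2' h3' hc, pswap_inv' h1 h2 h3, cast_val_zmod]; ring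

lemma pim_inj {a b c : ℕ} (h1 : 1 ≤ a) (h2 : a ≤ b) (h3 : b < c) (hc : c < n)
    (v : ZMod n) : Function.Injective (pim a b c v) := by
  intro x y hxy
  have := congrArg (pim (c - b) (c - a) c v) hxy
  rwa [pim_left_inv h1 h2 h3 hc, pim_left_inv h1 h2 h3 hc] at this

lemma pim_base {a b c : ℕ} (v : ZMod n) : pim a b c v v = v := by
  rw [pim]; simp

lemma mem_image_pim {a b c : ℕ} (h1 : 1 ≤ a) (h2 : a ≤ b) (h3 : b < c) (hc : c < n)
    {S : Finset (ZMod n)} (v y : ZMod n) :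
    y ∈ S.image (pim a b c v) ↔ pim (c - b) (c - a) c v y ∈ S := by
  constructor
  · rintro hy
    obtain ⟨s, hs, rfl⟩ := Finset.mem_image.mp hy
    rwa [pim_left_inv h1 h2 h3 hc]
  · intro hy
    refine Finset.mem_image.mpr ⟨_, hy, ?_⟩
    exact pim_right_inv h1 h2 h3 hc v y

/-- π moves successors of occupied places like itself, provided the boundaries
`0, a, b, c` are coordinates of empty places. -/
lemma pim_succ_of_mem {a b c : ℕ} (h1 : 1 ≤ a) (h2 : a ≤ b) (h3 : b < c) (hc : c < n)
    {S : Finset (ZMod n)} {v : ZMod n} (hv : v ∉ S)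
    (hA : v + (a : ZMod n) ∉ S) (hB : v + (b : ZMod n) ∉ S) (hC : v + (c : ZMod n) ∉ S)
    {y : ZMod n} (hy : y ∈ S) : pim a b c v (y + 1) = pim a b c v y + 1 := by
  set z := (y - v).val with hz
  have hzn : z < n := ZMod.val_lt _
  have hyz : y = v + (z : ZMod n) := by rw [hz, cast_val_zmod]; ring
  have hz0 : z ≠ 0 := by
    intro h; rw [h] at hyz; simp at hyz; exact hv (hyz ▸ hy)
  have hza : z ≠ a := by intro h; rw [h] at hyz; exact hA (hyz ▸ hy)
  have hzb : z ≠ b := by intro h; rw [h] at hyz; exact hB (hyz ▸ hy)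
  have hzc : z ≠ c := by intro h; rw [h] at hyz; exact hC (hyz ▸ hy)
  rcases Nat.lt_or_ge (z + 1) n with hlt | hge
  · have hcoord : ((y + 1) - v).val = z + 1 := by
      have : y + 1 - v = ((z + 1 : ℕ) : ZMod n) := by rw [hyz]; push_cast; ring
      rw [this, ZMod.val_cast_of_lt hlt]
    rw [pim, pim, hcoord, ← hz, pswap_succ h1 h2 h3 hz0 hza hzb hzc]
    push_cast; ring
  · -- z = n - 1, wrap-around
    have hzn1 : z = n - 1 := by omega
    have hzgtc : c < z := by omega
    have hwrap : y + 1 = v := by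
      rw [hyz]
      have : ((z : ZMod n) + 1) = ((n : ℕ) : ZMod n) := by
        push_cast
        rw [hzn1]
        push_cast [Nat.cast_sub (by omega : 1 ≤ n)]
        ring
      rw [add_assoc, this, ZMod.natCast_self, add_zero]
    have hy1 : pim a b c v (y + 1) = v := by rw [hwrap, pim_base]
    have hpz : pswap a b c z = z := by unfold pswap; split_ifs <;> first | tauto | omega
    rw [hy1, pim, ← hz, hpz]
    have : ((z : ℕ) : ZMod n) + 1 = 0 := by
      rw [hzn1]; push_cast [Nat.cast_sub (by omega : 1 ≤ n)]; simp
    rw [add_assoc, this, add_zero]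

end Perm

section Transport
variable [NeZero n]

set_option linter.unusedSectionVars false

lemma firstFree_image {Sf S' : Finset (ZMod n)} (π : ZMod n → ZMod n)
    (hinj : Function.Injective π)
    (haff : ∀ y ∈ Sf, π (y + 1) = π y + 1)
    (hsub : S' ⊆ Sf) {w : ZMod n} (hw : w ∉ S') (x : ZMod n) :
    firstFree (S'.image π) (π x) = π (firstFree S' x) := by
  have hex : ∃ i : ℕ, x + (i : ZMod n) ∉ S' := by
    refine ⟨(w - x).val, ?_⟩
    rw [cast_val_zmod]
    simpa using hw
  have hstep : ∀ i : ℕ, i ≤ Nat.find hex → π (x + (i : ZMod n)) = π x + (i : ZMod n) := by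
    intro i
    induction i with
    | zero => intro _; simp
    | succ i ih =>
      intro hi
      have h1 : x + (i : ZMod n) ∈ S' := by
        have := Nat.find_min hex (by omega : i < Nat.find hex)
        simpa using this
      have h2 : π (x + (i : ZMod n) + 1) = π (x + (i : ZMod n)) + 1 :=
        haff _ (hsub h1)
      have h3 : x + ((i + 1 : ℕ) : ZMod n) = x + (i : ZMod n) + 1 := by push_cast; ring
      rw [h3, h2, ih (by omega)]
      push_cast; ring
  have hex2 : ∃ i : ℕ, π x + (i : ZMod n) ∉ S'.image π := by
    refine ⟨Nat.find hex, ?_⟩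
    rw [← hstep _ le_rfl]
    intro hmem
    obtain ⟨s, hs, hsx⟩ := Finset.mem_image.mp hmem
    rw [hinj hsx] at hs
    exact (Nat.find_spec hex) hs
  have hR : firstFree S' x = x + ((Nat.find hex : ℕ) : ZMod n) := by
    rw [firstFree, dif_pos hex]
  have hL : firstFree (S'.image π) (π x) = π x + ((Nat.find hex2 : ℕ) : ZMod n) := by
    rw [firstFree, dif_pos hex2]
  rw [hL, hR]
  have heq : Nat.find hex2 = Nat.find hex := by
    refine le_antisymm (Nat.find_min' hex2 ?_) ?_
    · rw [← hstep _ le_rfl]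
      intro hmem
      obtain ⟨s, hs, hsx⟩ := Finset.mem_image.mp hmem
      rw [hinj hsx] at hs
      exact (Nat.find_spec hex) hs
    · by_contra hlt
      push_neg at hlt
      have hmem : x + ((Nat.find hex2 : ℕ) : ZMod n) ∈ S' := by
        have := Nat.find_min hex hlt
        simpa using this
      have : π x + ((Nat.find hex2 : ℕ) : ZMod n) ∈ S'.image π := by
        rw [← hstep _ (le_of_lt hlt)]
        exact Finset.mem_image_of_mem π hmem
      exact (Nat.find_spec hex2) this
  rw [heq, hstep _ le_rfl]

lemma occ_congr {t t' : ℕ → ZMod n} : ∀ j, (∀ i, i < j → t i = t' i) → occ t j = occ t' j := by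
  intro j
  induction j with
  | zero => intro _; rfl
  | succ j ih =>
    intro h
    show insert (firstFree (occ t j) (t j)) (occ t j) = _
    rw [ih (fun i hi => h i (by omega)), h j (by omega)]
    rfl

lemma occ_mono {t : ℕ → ZMod n} {j j' : ℕ} (h : j ≤ j') : occ t j ⊆ occ t j' := by
  induction j' with
  | zero => simp_all
  | succ j' ih =>
    rcases Nat.lt_or_ge j (j' + 1) with h2 | h2
    · exact (ih (by omega)).trans (Finset.subset_insert _ _)
    · have : j = j' + 1 := by omega
      subst this; rfl

lemma exists_not_mem_of_card_lt {S : Finset (ZMod n)} (h : S.card < n) : ∃ x, x ∉ S := by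
  by_contra hall
  push_neg at hall
  have : (Finset.univ : Finset (ZMod n)) ⊆ S := fun x _ => hall x
  have := Finset.card_le_card this
  rw [Finset.card_univ, ZMod.card] at this
  omega

lemma occ_card {t : ℕ → ℤ → ℕ} : True := trivial

lemma occ_card_eq {t : ℕ → ZMod n} : ∀ j, j ≤ n → (occ t j).card = j := by
  intro j
  induction j with
  | zero => intro _; rfl
  | succ j ih =>
    intro hj
    obtain ⟨w, hw⟩ := exists_not_mem_of_card_lt (S := occ t j) (by rw [ih (by omega)]; omega)
    show (insert (firstFree (occ t j) (t j)) (occ t j)).card = j + 1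
    rw [Finset.card_insert_of_notMem (firstFree_not_mem hw _), ih (by omega)]

lemma spot_not_mem {t : ℕ → ZMod n} {j : ℕ} (hj : j < n) : spot t j ∉ occ t j := by
  obtain ⟨w, hw⟩ := exists_not_mem_of_card_lt (S := occ t j) (by rw [occ_card_eq j (by omega)]; omega)
  exact firstFree_not_mem hw _

lemma occ_image {t : ℕ → ZMod n} {K : ℕ} (hK : K < n) (π : ZMod n → ZMod n)
    (hinj : Function.Injective π)
    (haff : ∀ y ∈ occ t K, π (y + 1) = π y + 1) :
    ∀ j, j ≤ K → occ (fun i => π (t i)) j = (occ t j).image π := by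
  intro j
  induction j with
  | zero => intro _; rfl
  | succ j ih =>
    intro hj
    obtain ⟨w, hw⟩ := exists_not_mem_of_card_lt (S := occ t j)
      (by rw [occ_card_eq j (by omega)]; omega)
    show insert (firstFree (occ (fun i => π (t i)) j) (π (t j))) (occ (fun i => π (t i)) j) = _
    rw [ih (by omega), firstFree_image π hinj haff (occ_mono (by omega : j ≤ K)) hw (t j)]
    show _ = (insert (firstFree (occ t j) (t j)) (occ t j)).image π
    rw [Finset.image_insert]

end Transport
section Swap
variable [NeZero n] {S : Finset (ZMod n)} {v : ZMod n}

set_option linter.unusedSectionVars false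
set_option maxHeartbeats 1000000

lemma no_between' (hv : v ∉ S) {j j' z : ℕ} (hjj : j + 1 = j') (h1 : Em S v j < z)
    (h2 : z < Em S v j') : v + (z : ZMod n) ∈ S :=
  no_between hv h1 (hjj ▸ h2)

/-- target value of `Em` for the swapped configuration -/
def Eim (S : Finset (ZMod n)) (v : ZMod n) (J a b c j : ℕ) : ℕ :=
  if j = 0 then 0 else if j ≤ J - 1 then Em S v j + (c - b) - a else Em S v j

variable {J a b c : ℕ}

lemma mem_T_iff (hv : v ∉ S) (h1 : 1 ≤ a) (h2 : a ≤ b) (h3 : b < c) (hcn : c < n)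
    {z : ℕ} (hz : z < n) :
    v + (z : ZMod n) ∈ S.image (pim a b c v) ↔
      v + ((pswap (c - b) (c - a) c z : ℕ) : ZMod n) ∈ S := by
  rw [mem_image_pim h1 h2 h3 hcn]
  rw [pim, coord_cancel _ _ hz]

lemma not_mem_T_v (hv : v ∉ S) (h1 : 1 ≤ a) (h2 : a ≤ b) (h3 : b < c) (hcn : c < n) :
    v ∉ S.image (pim a b c v) := by
  have h0 := mem_T_iff (S := S) (v := v) hv h1 h2 h3 hcn (z := 0) npos
  simp only [Nat.cast_zero, add_zero, pswap_zero] at h0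
  rw [h0]; exact hv

lemma Em_image (hv : v ∉ S) (hcard : S.card < n)
    (hJ2 : 2 ≤ J) (hJm : J ≤ n - S.card - 1)
    (ha : a = Em S v 1) (hb : b = Em S v (J - 1)) (hc : c = Em S v J) :
    ∀ j, j ≤ n - S.card - 1 →
      Em (S.image (pim a b c v)) v j = Eim S v J a b c j := by
  have h1 : 1 ≤ a := by rw [ha]; have := Em_lt_succ hv 0; simp at this; omega
  have h2 : a ≤ b := by rw [ha, hb]; exact Em_mono hv (by omega)
  have h3 : b < c := by rw [hb, hc]; have := Em_strictMono hv (show J - 1 < J by omega); omega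
  have hcn : c < n := by rw [hc]; exact Em_lt_n hv hcard J hJm
  have hvT : v ∉ S.image (pim a b c v) := not_mem_T_v hv h1 h2 h3 hcn
  intro j
  induction j with
  | zero => intro _; simp [Eim]
  | succ j ih =>
    intro hj
    have hjm : j ≤ n - S.card - 1 := by omega
    have IH := ih hjm
    -- arithmetic facts about Em
    have hmono : Em S v j < Em S v (j + 1) := Em_lt_succ hv j
    have hja : 1 ≤ j → a ≤ Em S v j := fun h => ha ▸ Em_mono hv h
    have hja' : 2 ≤ j → a < Em S v j := fun h => ha ▸ Em_strictMono hv (by omega)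
    have hjb : j ≤ J - 1 → Em S v j ≤ b := fun h => hb ▸ Em_mono hv h
    have hjb2 : J - 1 ≤ j → b ≤ Em S v j := fun h => hb ▸ Em_mono hv h
    have hjc : j ≤ J → Em S v j ≤ c := fun h => hc ▸ Em_mono hv h
    have hjc2 : J ≤ j → c ≤ Em S v j := fun h => hc ▸ Em_mono hv h
    have hka : 1 ≤ j + 1 → a ≤ Em S v (j + 1) := fun h => ha ▸ Em_mono hv h
    have hka' : 2 ≤ j + 1 → a < Em S v (j + 1) := fun h => ha ▸ Em_strictMono hv (by omega)
    have hkb : j + 1 ≤ J - 1 → Em S v (j + 1) ≤ b := fun h => hb ▸ Em_mono hv h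
    have hkb2 : J - 1 ≤ j + 1 → b ≤ Em S v (j + 1) := fun h => hb ▸ Em_mono hv h
    have hkb2' : J - 1 < j + 1 → b < Em S v (j + 1) := fun h => hb ▸ Em_strictMono hv h
    have hkc : j + 1 ≤ J → Em S v (j + 1) ≤ c := fun h => hc ▸ Em_mono hv h
    have hkc2 : J ≤ j + 1 → c ≤ Em S v (j + 1) := fun h => hc ▸ Em_mono hv h
    have hkn : Em S v (j + 1) < n := Em_lt_n hv hcard _ hj
    have hjn : Em S v j < n := Em_lt_n hv hcard _ hjm
    have hEstep : Em (S.image (pim a b c v)) v (j + 1)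
        = Fm (S.image (pim a b c v)) v (Em (S.image (pim a b c v)) v j + 1) := rfl
    rw [hEstep, IH]
    -- four regimes
    rcases (by omega : j = 0 ∨ (1 ≤ j ∧ j + 1 ≤ J - 1) ∨ j + 1 = J ∨ J ≤ j) with
      hreg | hreg | hreg | hreg
    · -- regime 1 : j = 0, j+1 = 1, target c - b
      subst hreg
      have hEimj : Eim S v J a b c 0 = 0 := by simp [Eim]
      have hEimj1 : Eim S v J a b c 1 = c - b := by
        unfold Eim
        rw [if_neg (by omega : ¬ (1 : ℕ) = 0), if_pos (by omega : 1 ≤ J - 1)]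
        rw [← ha]; omega
      rw [hEimj, hEimj1]
      refine Fm_eq hvT (by omega) ?_ ?_
      · rw [mem_T_iff hv h1 h2 h3 hcn (by omega)]
        have hps : pswap (c - b) (c - a) c (c - b) = c := by
          unfold pswap; split_ifs <;> omega
        rw [hps, hc]; exact Em_not_mem hv J
      · intro z hz1 hz2
        rw [mem_T_iff hv h1 h2 h3 hcn (by omega)]
        have hps : pswap (c - b) (c - a) c z = z + b := by
          unfold pswap; split_ifs <;> omega
        rw [hps]
        refine no_between' hv (j := J - 1) (j' := J) (by omega) (by omega) (by omega)
    · -- regime 2 : 1 ≤ j, j + 1 ≤ J - 1 ; middle blocks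
      have hEimj : Eim S v J a b c j = Em S v j + (c - b) - a := by
        unfold Eim; rw [if_neg (by omega), if_pos (by omega)]
      have hEimj1 : Eim S v J a b c (j + 1) = Em S v (j + 1) + (c - b) - a := by
        unfold Eim; rw [if_neg (by omega), if_pos (by omega)]
      rw [hEimj, hEimj1]
      have hja1 := hja (by omega)
      have hka1 := hka' (by omega)
      have hjb1 := hjb (by omega)
      have hkb1 := hkb (by omega)
      refine Fm_eq hvT (by omega) ?_ ?_
      · rw [mem_T_iff hv h1 h2 h3 hcn (by omega)]
        have hps : pswap (c - b) (c - a) c (Em S v (j + 1) + (c - b) - a)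
            = Em S v (j + 1) := by
          unfold pswap; split_ifs <;> omega
        rw [hps]; exact Em_not_mem hv (j + 1)
      · intro z hz1 hz2
        rw [mem_T_iff hv h1 h2 h3 hcn (by omega)]
        have hps : pswap (c - b) (c - a) c z = z + a - (c - b) := by
          unfold pswap; split_ifs <;> omega
        rw [hps]
        refine no_between' hv (j := j) rfl (by omega) (by omega)
    · -- regime 3 : j + 1 = J ; target c
      have hEimj : Eim S v J a b c j = Em S v j + (c - b) - a := by
        unfold Eim; rw [if_neg (by omega), if_pos (by omega)]
      have hEimj1 : Eim S v J a b c (j + 1) = c := by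
        unfold Eim; rw [if_neg (by omega), if_neg (by omega), hc, hreg]
      rw [hEimj, hEimj1]
      have hjb1 := hjb (by omega)
      have hjb2' := hjb2 (by omega)
      have hja1 := hja (by omega)
      have hEmjb : Em S v j = b := by omega
      refine Fm_eq hvT (by omega) ?_ ?_
      · rw [mem_T_iff hv h1 h2 h3 hcn (by omega)]
        have hps : pswap (c - b) (c - a) c c = a := by
          unfold pswap; split_ifs <;> omega
        rw [hps, ha]; exact Em_not_mem hv 1
      · intro z hz1 hz2
        rw [mem_T_iff hv h1 h2 h3 hcn (by omega)]
        have hps : pswap (c - b) (c - a) c z = z - (c - a) := by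
          unfold pswap; split_ifs <;> omega
        rw [hps]
        refine no_between' hv (j := 0) (j' := 1) rfl
          (by simpa using (by omega : 0 < z - (c - a))) (by omega)
    · -- regime 4 : J ≤ j ; identity range
      have hjc1 := hjc2 hreg
      have hEimj : Eim S v J a b c j = Em S v j := by
        unfold Eim; rw [if_neg (by omega), if_neg (by omega)]
      have hEimj1 : Eim S v J a b c (j + 1) = Em S v (j + 1) := by
        unfold Eim; rw [if_neg (by omega), if_neg (by omega)]
      rw [hEimj, hEimj1]
      refine Fm_eq hvT (by omega) ?_ ?_
      · rw [mem_T_iff hv h1 h2 h3 hcn (by omega)]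
        have hps : pswap (c - b) (c - a) c (Em S v (j + 1)) = Em S v (j + 1) := by
          unfold pswap; split_ifs <;> omega
        rw [hps]; exact Em_not_mem hv (j + 1)
      · intro z hz1 hz2
        rw [mem_T_iff hv h1 h2 h3 hcn (by omega)]
        have hps : pswap (c - b) (c - a) c z = z := by
          unfold pswap; split_ifs <;> omega
        rw [hps]
        refine no_between' hv (j := j) rfl (by omega) (by omega)

end Swap
section SwapCor
variable [NeZero n] {S : Finset (ZMod n)} {v : ZMod n} {J a b c : ℕ}

set_option linter.unusedSectionVars false
set_option maxHeartbeats 1000000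

lemma swap_params (hv : v ∉ S) (hcard : S.card < n)
    (hJ2 : 2 ≤ J) (hJm : J ≤ n - S.card - 1)
    (ha : a = Em S v 1) (hb : b = Em S v (J - 1)) (hc : c = Em S v J) :
    1 ≤ a ∧ a ≤ b ∧ b < c ∧ c < n := by
  refine ⟨?_, ?_, ?_, ?_⟩
  · rw [ha]; have := Em_lt_succ hv 0; simp at this; omega
  · rw [ha, hb]; exact Em_mono hv (by omega)
  · rw [hb, hc]; have := Em_strictMono hv (show J - 1 < J by omega); omega
  · rw [hc]; exact Em_lt_n hv hcard J hJm

lemma Tcard (hv : v ∉ S) (hcard : S.card < n)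
    (hJ2 : 2 ≤ J) (hJm : J ≤ n - S.card - 1)
    (ha : a = Em S v 1) (hb : b = Em S v (J - 1)) (hc : c = Em S v J) :
    (S.image (pim a b c v)).card = S.card := by
  obtain ⟨h1, h2, h3, hcn⟩ := swap_params hv hcard hJ2 hJm ha hb hc
  exact Finset.card_image_of_injective _ (pim_inj h1 h2 h3 hcn v)

lemma blockSize_T_base (hv : v ∉ S) (hcard : S.card < n)
    (hJ2 : 2 ≤ J) (hJm : J ≤ n - S.card - 1)
    (ha : a = Em S v 1) (hb : b = Em S v (J - 1)) (hc : c = Em S v J) :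
    blockSize (S.image (pim a b c v)) v = blockSize S v := by
  obtain ⟨h1, h2, h3, hcn⟩ := swap_params hv hcard hJ2 hJm ha hb hc
  have hvT := not_mem_T_v (S := S) hv h1 h2 h3 hcn
  have hTc := Tcard hv hcard hJ2 hJm ha hb hc
  have hTcard : (S.image (pim a b c v)).card < n := by omega
  rw [blockSize_base hvT hTcard, blockSize_base hv hcard, hTc]
  have hEmax := Em_image hv hcard hJ2 hJm ha hb hc (n - S.card - 1) le_rfl
  have : Eim S v J a b c (n - S.card - 1) = Em S v (n - S.card - 1) := by
    unfold Eim; rw [if_neg (by omega), if_neg (by omega)]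
  rw [hEmax, this]

lemma blockSize_T_next (hv : v ∉ S) (hcard : S.card < n)
    (hJ2 : 2 ≤ J) (hJm : J ≤ n - S.card - 1)
    (ha : a = Em S v 1) (hb : b = Em S v (J - 1)) (hc : c = Em S v J) :
    blockSize (S.image (pim a b c v)) (nextEmpty (S.image (pim a b c v)) v) = c - b := by
  obtain ⟨h1, h2, h3, hcn⟩ := swap_params hv hcard hJ2 hJm ha hb hc
  have hvT := not_mem_T_v (S := S) hv h1 h2 h3 hcn
  have hE1 : Em (S.image (pim a b c v)) v 1 = c - b := by
    have h := Em_image hv hcard hJ2 hJm ha hb hc 1 (by omega)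
    have : Eim S v J a b c 1 = c - b := by
      unfold Eim; rw [if_neg (by omega), if_pos (by omega), ← ha]; omega
    rw [h, this]
  have hnext : nextEmpty (S.image (pim a b c v)) v
      = v + ((Em (S.image (pim a b c v)) v 1 : ℕ) : ZMod n) := by
    have h0 := nextEmpty_eq_coord (S := S.image (pim a b c v)) hvT (c := 0) npos
    simp at h0; exact h0
  rw [hnext, hE1]
  refine blockSize_between hvT (c₀ := 0) (by omega) (by omega) (by simpa using hvT) ?_
  intro z hz1 hz2
  refine no_between' hvT (j := 0) (j' := 1) rfl (by simpa using hz1) (by omega)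

lemma pim_T_inverse (hv : v ∉ S) (hcard : S.card < n)
    (hJ2 : 2 ≤ J) (hJm : J ≤ n - S.card - 1)
    (ha : a = Em S v 1) (hb : b = Em S v (J - 1)) (hc : c = Em S v J) :
    Em (S.image (pim a b c v)) v 1 = c - b
    ∧ Em (S.image (pim a b c v)) v (J - 1) = c - a
    ∧ Em (S.image (pim a b c v)) v J = c := by
  obtain ⟨h1, h2, h3, hcn⟩ := swap_params hv hcard hJ2 hJm ha hb hc
  refine ⟨?_, ?_, ?_⟩
  · have h := Em_image hv hcard hJ2 hJm ha hb hc 1 (by omega)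
    have h' : Eim S v J a b c 1 = c - b := by
      unfold Eim; rw [if_neg (by omega), if_pos (by omega), ← ha]; omega
    rw [h, h']
  · have h := Em_image hv hcard hJ2 hJm ha hb hc (J - 1) (by omega)
    have h' : Eim S v J a b c (J - 1) = c - a := by
      unfold Eim; rw [if_neg (by omega), if_pos (by omega), ← hb]; omega
    rw [h, h']
  · have h := Em_image hv hcard hJ2 hJm ha hb hc J (by omega)
    have h' : Eim S v J a b c J = c := by
      unfold Eim; rw [if_neg (by omega), if_neg (by omega), ← hc]
    rw [h, h']

end SwapCor

section PhiDef
variable [NeZero n]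

set_option linter.unusedSectionVars false
set_option maxHeartbeats 1000000

def toFin (z : ZMod n) : Fin n := ⟨z.val, ZMod.val_lt z⟩

lemma toFin_cast (z : ZMod n) : (((toFin z : Fin n) : ℕ) : ZMod n) = z := cast_val_zmod z

def Sof (n k : ℕ) (t : Fin (n - 1) → Fin n) : Finset (ZMod n) :=
  occ (extend n (n - 1) t) (k - 1)

def vof (n k : ℕ) (t : Fin (n - 1) → Fin n) : ZMod n :=
  spot (extend n (n - 1) t) (k - 1)

def pimOf (n k J : ℕ) [NeZero n] (t : Fin (n - 1) → Fin n) : ZMod n → ZMod n :=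
  pim (Em (Sof n k t) (vof n k t) 1) (Em (Sof n k t) (vof n k t) (J - 1))
    (Em (Sof n k t) (vof n k t) J) (vof n k t)

def Phi (n k J : ℕ) [NeZero n] (t : Fin (n - 1) → Fin n) : Fin (n - 1) → Fin n :=
  fun i => if (i : ℕ) < k then toFin (pimOf n k J t (((t i : ℕ) : ZMod n))) else t i

lemma extend_lt (t : Fin (n - 1) → Fin n) {i : ℕ} (hi : i < n - 1) :
    extend n (n - 1) t i = ((t ⟨i, hi⟩ : ℕ) : ZMod n) := by
  rw [extend, dif_pos hi]

lemma extend_Phi (k J : ℕ) (t : Fin (n - 1) → Fin n) (hk2 : k ≤ n - 1) {i : ℕ} (hi : i < k) :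
    extend n (n - 1) (Phi n k J t) i = pimOf n k J t (extend n (n - 1) t i) := by
  have hi' : i < n - 1 := by omega
  have h1 : Phi n k J t ⟨i, hi'⟩ = toFin (pimOf n k J t (((t ⟨i, hi'⟩ : ℕ) : ZMod n))) := by
    simp only [Phi]
    rw [if_pos]
    exact hi
  rw [extend_lt _ hi', extend_lt _ hi', h1, toFin_cast]

end PhiDef
section PhiSpec
variable [NeZero n]

set_option linter.unusedSectionVars false
set_option maxHeartbeats 2000000

lemma Phi_spec (k J : ℕ) (hk1 : 1 ≤ k) (hk2 : k ≤ n - 1) (hn2 : 2 ≤ n)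
    (hJ2 : 2 ≤ J) (hJm : J ≤ n - k) (t : Fin (n - 1) → Fin n) :
    Lsize (extend n (n - 1) (Phi n k J t)) k = Lsize (extend n (n - 1) t) k
    ∧ Rsize (extend n (n - 1) (Phi n k J t)) k
        = Em (Sof n k t) (vof n k t) J - Em (Sof n k t) (vof n k t) (J - 1)
    ∧ Phi n k J (Phi n k J t) = t := by
  have hScard : (Sof n k t).card = k - 1 := occ_card_eq (k - 1) (by omega)
  have hcard : (Sof n k t).card < n := by omega
  have hv : vof n k t ∉ Sof n k t := spot_not_mem (by omega : k - 1 < n)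
  have hJm' : J ≤ n - (Sof n k t).card - 1 := by omega
  obtain ⟨h1, h2, h3, hcn⟩ := swap_params hv hcard hJ2 hJm' rfl rfl rfl
  set S := Sof n k t with hS
  set v := vof n k t with hV
  set a := Em S v 1 with hA
  set b := Em S v (J - 1) with hB
  set c := Em S v J with hC
  have hπ : pimOf n k J t = pim a b c v := rfl
  have hinj : Function.Injective (pim a b c v) := pim_inj h1 h2 h3 hcn v
  have haff : ∀ y ∈ S, pim a b c v (y + 1) = pim a b c v y + 1 := fun y hy =>
    pim_succ_of_mem h1 h2 h3 hcn hv (Em_not_mem hv 1) (Em_not_mem hv (J - 1))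
      (Em_not_mem hv J) hy
  have hocc : occ (extend n (n - 1) (Phi n k J t)) (k - 1) = S.image (pim a b c v) := by
    have hagree : ∀ i, i < k - 1 →
        extend n (n - 1) (Phi n k J t) i = pim a b c v (extend n (n - 1) t i) := by
      intro i hi
      rw [extend_Phi k J t hk2 (by omega : i < k), hπ]
    rw [occ_congr (k - 1) hagree]
    exact occ_image (by omega : k - 1 < n) (pim a b c v) hinj
      (fun y hy => haff y hy) (k - 1) le_rfl
  have hspot : spot (extend n (n - 1) (Phi n k J t)) (k - 1) = v := by
    rw [spot, hocc, extend_Phi k J t hk2 (by omega : k - 1 < k), hπ]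
    rw [firstFree_image (pim a b c v) hinj haff subset_rfl hv]
    have : firstFree S (extend n (n - 1) t (k - 1)) = v := rfl
    rw [this, pim_base]
  refine ⟨?_, ?_, ?_⟩
  · show blockSize (occ (extend n (n - 1) (Phi n k J t)) (k - 1))
        (spot (extend n (n - 1) (Phi n k J t)) (k - 1)) = _
    rw [hocc, hspot]
    exact blockSize_T_base hv hcard hJ2 hJm' rfl rfl rfl
  · show blockSize (occ (extend n (n - 1) (Phi n k J t)) (k - 1))
        (nextEmpty (occ (extend n (n - 1) (Phi n k J t)) (k - 1))
          (spot (extend n (n - 1) (Phi n k J t)) (k - 1))) = _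
    rw [hocc, hspot]
    rw [blockSize_T_next hv hcard hJ2 hJm' rfl rfl rfl]
  · -- involution
    obtain ⟨e1, e2, e3⟩ := pim_T_inverse hv hcard hJ2 hJm' rfl rfl rfl
    have hSof : Sof n k (Phi n k J t) = S.image (pim a b c v) := hocc
    have hVof : vof n k (Phi n k J t) = v := hspot
    have hpimPhi : pimOf n k J (Phi n k J t) = pim (c - b) (c - a) c v := by
      unfold pimOf
      rw [hSof, hVof, e1, e2, e3]
    funext i
    by_cases hik : (i : ℕ) < k
    · have hPhi_i : Phi n k J t i = toFin (pimOf n k J t (((t i : ℕ) : ZMod n))) := by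
        simp only [Phi]; rw [if_pos]; exact hik
      have hPP : Phi n k J (Phi n k J t) i
          = toFin (pimOf n k J (Phi n k J t) (((Phi n k J t i : ℕ) : ZMod n))) := by
        simp only [Phi]; rw [if_pos]; exact hik
      rw [hPP, hPhi_i, toFin_cast, hpimPhi, hπ, pim_left_inv h1 h2 h3 hcn]
      apply Fin.ext
      show (((t i : ℕ) : ZMod n)).val = (t i : ℕ)
      exact ZMod.val_cast_of_lt (t i).isLt
    · have hPhi_i : Phi n k J t i = t i := by
        simp only [Phi]; rw [if_neg]; exact hik
      have hPP : Phi n k J (Phi n k J t) i = Phi n k J t i := by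
        simp only [Phi]; rw [if_neg]; exact hik
      rw [hPP, hPhi_i]

end PhiSpec
section Final
variable [NeZero n]

set_option linter.unusedSectionVars false
set_option maxHeartbeats 2000000

lemma ctx_of (k : ℕ) (hk1 : 1 ≤ k) (hk2 : k ≤ n - 1) (hn2 : 2 ≤ n)
    (t : Fin (n - 1) → Fin n) :
    vof n k t ∉ Sof n k t ∧ (Sof n k t).card = k - 1 := by
  constructor
  · exact spot_not_mem (by omega : k - 1 < n)
  · exact occ_card_eq (k - 1) (by omega)

lemma Rsize_eq (k : ℕ) (hk1 : 1 ≤ k) (hk2 : k ≤ n - 1) (hn2 : 2 ≤ n)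
    (t : Fin (n - 1) → Fin n) :
    Rsize (extend n (n - 1) t) k = Em (Sof n k t) (vof n k t) 1 := by
  obtain ⟨hv, hScard⟩ := ctx_of k hk1 hk2 hn2 t
  have hcard : (Sof n k t).card < n := by omega
  show blockSize (Sof n k t) (nextEmpty (Sof n k t) (vof n k t)) = _
  have hne : nextEmpty (Sof n k t) (vof n k t)
      = vof n k t + ((Fm (Sof n k t) (vof n k t) 1 : ℕ) : ZMod n) := by
    simpa using nextEmpty_eq_coord hv (c := 0) npos
  have hFm : Fm (Sof n k t) (vof n k t) 1 = Em (Sof n k t) (vof n k t) 1 := rfl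
  rw [hne, hFm]
  have hE1n : Em (Sof n k t) (vof n k t) 1 < n :=
    Em_lt_n hv hcard 1 (by omega)
  have h01 : 0 < Em (Sof n k t) (vof n k t) 1 := by
    have := Em_lt_succ hv 0; simpa using this
  have h := blockSize_between hv (c₀ := 0) h01 (by omega) (by simpa using hv) ?_
  · simpa using h
  · intro z hz1 hz2
    exact no_between' hv (j := 0) (j' := 1) rfl (by simpa using hz1) hz2

lemma Lsize_eq (k : ℕ) (hk1 : 1 ≤ k) (hk2 : k ≤ n - 1) (hn2 : 2 ≤ n)
    (t : Fin (n - 1) → Fin n) :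
    Lsize (extend n (n - 1) t) k + Em (Sof n k t) (vof n k t) (n - k) = n
    ∧ Em (Sof n k t) (vof n k t) (n - k) < n := by
  obtain ⟨hv, hScard⟩ := ctx_of k hk1 hk2 hn2 t
  have hcard : (Sof n k t).card < n := by omega
  have hidx : n - (Sof n k t).card - 1 = n - k := by omega
  have hEn : Em (Sof n k t) (vof n k t) (n - k) < n := by
    rw [← hidx]; exact Em_lt_n hv hcard _ le_rfl
  have hbs : Lsize (extend n (n - 1) t) k = n - Em (Sof n k t) (vof n k t) (n - k) := by
    show blockSize (Sof n k t) (vof n k t) = _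
    rw [blockSize_base hv hcard, hidx]
  constructor
  · omega
  · exact hEn

lemma Em_mono_of (k : ℕ) (hk1 : 1 ≤ k) (hk2 : k ≤ n - 1) (hn2 : 2 ≤ n)
    (t : Fin (n - 1) → Fin n) {i j : ℕ} (hij : i ≤ j) :
    Em (Sof n k t) (vof n k t) i ≤ Em (Sof n k t) (vof n k t) j :=
  Em_mono (ctx_of k hk1 hk2 hn2 t).1 hij

end Final
theorem cond_exp_R_given_L (n k : ℕ) (hk1 : 1 ≤ k) (hk2 : k ≤ n - 1) (l : ℕ) :
    expect n (n - 1) (fun t => (Rsize t k : ℝ) * (if Lsize t k = l then 1 else 0))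
      = (((n : ℝ) - l) / ((n : ℝ) - k)) * prob n (n - 1) (fun t => Lsize t k = l) := by
  have hn2 : 2 ≤ n := by omega
  haveI : NeZero n := ⟨by omega⟩
  -- step: for each 0 ≤ j < n - k, the expectation of the (j+1)-st block size equals that of R
  have hstep : ∀ j, j < n - k →
      (∑ t : Fin (n - 1) → Fin n,
        ((Em (Sof n k t) (vof n k t) (j + 1) : ℝ) - (Em (Sof n k t) (vof n k t) j : ℝ))
          * (if Lsize (extend n (n - 1) t) k = l then (1 : ℝ) else 0))
      = ∑ t : Fin (n - 1) → Fin n,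
          (Rsize (extend n (n - 1) t) k : ℝ)
            * (if Lsize (extend n (n - 1) t) k = l then (1 : ℝ) else 0) := by
    intro j hj
    rcases Nat.eq_zero_or_pos j with rfl | hj1
    · refine Finset.sum_congr rfl ?_
      intro t _
      rw [Rsize_eq k hk1 hk2 hn2 t]
      norm_num
    · have hinv : Function.Involutive (Phi n k (j + 1)) := fun t =>
        (Phi_spec k (j + 1) hk1 hk2 hn2 (by omega) (by omega) t).2.2
      refine Fintype.sum_equiv (Function.Involutive.toPerm _ hinv) _ _ ?_
      intro t
      have he : (Function.Involutive.toPerm _ hinv) t = Phi n k (j + 1) t := rfl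
      rw [he]
      obtain ⟨hL, hR, _⟩ := Phi_spec k (j + 1) hk1 hk2 hn2 (by omega) (by omega) t
      rw [hL, hR]
      have hsub : (j + 1) - 1 = j := by omega
      rw [hsub]
      have hmono := Em_mono_of k hk1 hk2 hn2 t (show j ≤ j + 1 by omega)
      rw [Nat.cast_sub hmono]
  -- key identity
  have hkey : ((n - k : ℕ) : ℝ) *
      (∑ t : Fin (n - 1) → Fin n,
        (Rsize (extend n (n - 1) t) k : ℝ)
          * (if Lsize (extend n (n - 1) t) k = l then (1 : ℝ) else 0))
      = ((n : ℝ) - l) *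
      (∑ t : Fin (n - 1) → Fin n,
        (if Lsize (extend n (n - 1) t) k = l then (1 : ℝ) else 0)) := by
    calc ((n - k : ℕ) : ℝ) * _
        = ∑ _j ∈ Finset.range (n - k),
            (∑ t : Fin (n - 1) → Fin n,
              (Rsize (extend n (n - 1) t) k : ℝ)
                * (if Lsize (extend n (n - 1) t) k = l then (1 : ℝ) else 0)) := by
          rw [Finset.sum_const, Finset.card_range, nsmul_eq_mul]
      _ = ∑ j ∈ Finset.range (n - k),
            (∑ t : Fin (n - 1) → Fin n,
              ((Em (Sof n k t) (vof n k t) (j + 1) : ℝ) - (Em (Sof n k t) (vof n k t) j : ℝ))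
                * (if Lsize (extend n (n - 1) t) k = l then (1 : ℝ) else 0)) := by
          refine Finset.sum_congr rfl ?_
          intro j hj
          exact (hstep j (Finset.mem_range.mp hj)).symm
      _ = ∑ t : Fin (n - 1) → Fin n,
            (∑ j ∈ Finset.range (n - k),
              ((Em (Sof n k t) (vof n k t) (j + 1) : ℝ) - (Em (Sof n k t) (vof n k t) j : ℝ)))
              * (if Lsize (extend n (n - 1) t) k = l then (1 : ℝ) else 0) := by
          rw [Finset.sum_comm]
          refine Finset.sum_congr rfl ?_
          intro t _
          rw [Finset.sum_mul]
      _ = ∑ t : Fin (n - 1) → Fin n,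
            ((n : ℝ) - l) * (if Lsize (extend n (n - 1) t) k = l then (1 : ℝ) else 0) := by
          refine Finset.sum_congr rfl ?_
          intro t _
          rw [Finset.sum_range_sub (fun j => (Em (Sof n k t) (vof n k t) j : ℝ))]
          by_cases hLl : Lsize (extend n (n - 1) t) k = l
          · obtain ⟨hsum, hlt⟩ := Lsize_eq k hk1 hk2 hn2 t
            rw [hLl] at hsum
            have hcast : (Em (Sof n k t) (vof n k t) (n - k) : ℝ) = (n : ℝ) - l := by
              have := congrArg (fun m : ℕ => (m : ℝ)) hsum
              push_cast at this
              linarith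
            rw [if_pos hLl]
            simp only [Em_zero, Nat.cast_zero, sub_zero]
            rw [hcast]
          · rw [if_neg hLl]
            ring
      _ = ((n : ℝ) - l) *
            (∑ t : Fin (n - 1) → Fin n,
              (if Lsize (extend n (n - 1) t) k = l then (1 : ℝ) else 0)) := by
          rw [Finset.mul_sum]
  have hcastnk : ((n - k : ℕ) : ℝ) = (n : ℝ) - k := by
    rw [Nat.cast_sub (by omega : k ≤ n)]
  rw [hcastnk] at hkey
  have hnk : (n : ℝ) - k ≠ 0 := by
    have hkn : (k : ℝ) < n := by exact_mod_cast (by omega : k < n)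
    linarith
  have hexp : expect n (n - 1)
      (fun t => (Rsize t k : ℝ) * (if Lsize t k = l then 1 else 0))
      = (∑ t : Fin (n - 1) → Fin n,
          (Rsize (extend n (n - 1) t) k : ℝ)
            * (if Lsize (extend n (n - 1) t) k = l then (1 : ℝ) else 0)) / (n : ℝ) ^ (n - 1) := by
    rw [expect]
  have hprob : prob n (n - 1) (fun t => Lsize t k = l)
      = (∑ t : Fin (n - 1) → Fin n,
          (if Lsize (extend n (n - 1) t) k = l then (1 : ℝ) else 0)) / (n : ℝ) ^ (n - 1) := by
    rw [prob, expect]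
    congr 1
    refine Finset.sum_congr rfl ?_
    intro t _
    by_cases h : Lsize (extend n (n - 1) t) k = l
    · simp [h]
    · simp [h]
  rw [hexp, hprob, div_mul_div_comm, ← hkey, mul_div_mul_left _ _ hnk]

end Parking
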